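/- (Key lemma in the proof of Theorem 1.) With the 0/1 matrix L built from a fixed ranking r_x ∈ R, for every integer p ≥ 2 and all indices i > j, the entry (L^{p−1})_{ij} equals the number of common subsequences of R of length p whose first item is r_{x_j} and whose last item is r_{x_i}. -/

import Mathlib

open List Matrix

/-- The set of nonempty common subsequences of a family of rankings,
where a ranking is a list and "subsequence" is `List.Sublist`. -/
def commonSubseq {α : Type*} (R : Set (List α)) : Set (List α) :=
  {y | y ≠ [] ∧ ∀ r ∈ R, y.Sublist r}

/-- `κ(R)`: the number of nonempty common subsequences of the family `R`. -/
noncomputable def kappa {α : Type*} (R : Set (List α)) : ℕ :=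
  (commonSubseq R).ncard

/-- `κ_p(R)`: the number of nonempty common subsequences of `R` of length `p`. -/
noncomputable def kappaP {α : Type*} (p : ℕ) (R : Set (List α)) : ℕ :=
  {y ∈ commonSubseq R | y.length = p}.ncard

section Aux
variable {α : Type*} [DecidableEq α]

/-- A two-element sublist of a nodup list gives membership and index order. -/
lemma pair_sublist_of {r : List α} (hr : r.Nodup) {a b : α} (h : [a, b].Sublist r) :
    a ∈ r ∧ b ∈ r ∧ r.idxOf a < r.idxOf b := by
  have h' : ([a] ++ [b]).Sublist r := by simpa using h
  obtain ⟨r₁, r₂, rfl, h₁, h₂⟩ := List.append_sublist_iff.mp h'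
  have ha : a ∈ r₁ := h₁.subset (List.mem_singleton_self a)
  have hb : b ∈ r₂ := h₂.subset (List.mem_singleton_self b)
  have hbn : b ∉ r₁ := fun hb1 => (List.disjoint_of_nodup_append hr) hb1 hb
  refine ⟨List.mem_append_left _ ha, List.mem_append_right _ hb, ?_⟩
  rw [List.idxOf_append_of_mem ha, List.idxOf_append_of_notMem hbn]
  calc r₁.idxOf a < r₁.length := List.idxOf_lt_length_iff.mpr ha
    _ ≤ r₁.length + r₂.idxOf b := Nat.le_add_right _ _

/-- Extend a sublist ending in `a` by an element `b` occurring later. -/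
lemma sublist_snoc_of {r : List α} (hr : r.Nodup) {l : List α} {a b : α}
    (h : (l ++ [a]).Sublist r) (hb : b ∈ r)
    (hab : r.idxOf a < r.idxOf b) :
    (l ++ [a, b]).Sublist r := by
  obtain ⟨r₁, r₂, rfl, h₁, h₂⟩ := List.append_sublist_iff.mp h
  have ha : a ∈ r₂ := h₂.subset (List.mem_singleton_self a)
  obtain ⟨r₃, r₄, rfl⟩ := List.append_of_mem ha
  have hassoc : r₁ ++ (r₃ ++ a :: r₄) = (r₁ ++ r₃) ++ a :: r₄ := by
    rw [List.append_assoc]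
  have hnd : ((r₁ ++ r₃) ++ a :: r₄).Nodup := by rw [← hassoc]; exact hr
  have hna : a ∉ r₁ ++ r₃ :=
    fun hmem => (List.disjoint_of_nodup_append hnd) hmem List.mem_cons_self
  have hia : (r₁ ++ (r₃ ++ a :: r₄)).idxOf a = (r₁ ++ r₃).length := by
    rw [hassoc, List.idxOf_append_of_notMem hna, List.idxOf_cons_self, Nat.add_zero]
  have hbn : b ∉ r₁ ++ r₃ := by
    intro hmem
    have : (r₁ ++ (r₃ ++ a :: r₄)).idxOf b < (r₁ ++ r₃).length := by
      rw [hassoc, List.idxOf_append_of_mem hmem]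
      exact List.idxOf_lt_length_iff.mpr hmem
    omega
  have hba : b ≠ a := by rintro rfl; omega
  have hb4 : b ∈ r₄ := by
    rw [hassoc] at hb
    rcases List.mem_append.mp hb with h' | h'
    · exact absurd h' hbn
    · rcases List.mem_cons.mp h' with h'' | h''
      · exact absurd h'' hba
      · exact h''
  have h2 : [a, b].Sublist (r₃ ++ a :: r₄) := by
    have : [a, b].Sublist (a :: r₄) :=
      List.Sublist.cons₂ a (List.singleton_sublist.mpr hb4)
    exact this.trans (List.sublist_append_right r₃ (a :: r₄))
  exact List.Sublist.append h₁ h2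

/-- A list of length two is determined by its head and last. -/
lemma eq_pair_of {y : List α} (h2 : y.length = 2) {a b : α}
    (hh : y.head? = some a) (hl : y.getLast? = some b) : y = [a, b] := by
  match y, h2 with
  | [x, z], _ =>
    simp only [List.head?_cons, Option.some.injEq] at hh
    have : [x, z].getLast? = some z := rfl
    rw [this] at hl
    simp only [Option.some.injEq] at hl
    rw [hh, hl]

/-- Head and last of a list of length ≥ 2 form a 2-element sublist. -/
lemma pair_head_last_sublist {y : List α} (h2 : 2 ≤ y.length) {a b : α}
    (hh : y.head? = some a) (hl : y.getLast? = some b) : [a, b].Sublist y := by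
  have hyne : y ≠ [] := by rintro rfl; simp at h2
  obtain ⟨h', hb⟩ := List.mem_getLast?_eq_getLast (Option.mem_def.mpr hl)
  have hsplit : y.dropLast ++ [b] = y := by
    rw [hb]; exact List.dropLast_append_getLast h'
  have hdne : y.dropLast ≠ [] := by
    intro h0
    have := List.length_dropLast (xs := y)
    rw [h0] at this
    simp at this
    omega
  have had : a ∈ y.dropLast := by
    rw [← hsplit, List.head?_append] at hh
    cases hdh : y.dropLast.head? with
    | none => exact absurd (List.head?_eq_none_iff.mp hdh) hdne
    | some x =>
      rw [hdh] at hh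
      simp only [Option.some_or, Option.some.injEq] at hh
      subst hh
      exact List.mem_of_mem_head? (Option.mem_def.mpr hdh)
  have : ([a] ++ [b]).Sublist (y.dropLast ++ [b]) :=
    List.Sublist.append (List.singleton_sublist.mpr had) (List.Sublist.refl [b])
  rw [hsplit] at this
  simpa using this

end Aux

/-- key lemma of Theorem 1: for `p ≥ 2` and indices `i > j`, the
entry `(L^(p-1))_{ij}` equals the number of common subsequences of `R` of
length `p` whose first item is `rx_j` and whose last item is `rx_i`. -/
theorem matrix_power_counts_paths {α : Type*} [DecidableEq α]
    (R : Finset (List α)) (hR : R.Nonempty) (hnd : ∀ r ∈ R, r.Nodup)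
    (rx : List α) (hrx : rx ∈ R)
    (L : Matrix (Fin rx.length) (Fin rx.length) ℝ)
    (hlow : ∀ i j : Fin rx.length, j < i →
      L i j = if (∀ r ∈ R, rx.get i ∈ r) ∧ (∀ r ∈ R, rx.get j ∈ r) ∧
          (∀ r ∈ R, r.idxOf (rx.get j) < r.idxOf (rx.get i))
        then 1 else 0)
    (hrest : ∀ i j : Fin rx.length, ¬ j < i → L i j = 0)
    (p : ℕ) (hp : 2 ≤ p) (i j : Fin rx.length) (hij : j < i) :
    (L ^ (p - 1)) i j =
      ({y ∈ commonSubseq (R : Set (List α)) |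
          y.length = p ∧ y.head? = some (rx.get j) ∧
            y.getLast? = some (rx.get i)}.ncard : ℝ) := by
  classical
  have hn : 0 < rx.length := i.pos
  have hrxnd : rx.Nodup := hnd rx hrx
  set S : ℕ → α → α → Finset (List α) := fun q a b =>
    rx.sublists.toFinset.filter
      (fun y => (∀ r ∈ R, y.Sublist r) ∧ y.length = q ∧ y.head? = some a ∧
        y.getLast? = some b) with hS
  have hSmem : ∀ (q : ℕ) (a b : α) (y : List α), y ∈ S q a b ↔
      (∀ r ∈ R, y.Sublist r) ∧ y.length = q ∧ y.head? = some a ∧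
        y.getLast? = some b := by
    intro q a b y
    constructor
    · intro hy; exact (Finset.mem_filter.mp hy).2
    · intro hy
      exact Finset.mem_filter.mpr
        ⟨List.mem_toFinset.mpr (List.mem_sublists.mpr (hy.1 rx hrx)), hy⟩
  -- base case
  have hbase : ∀ i j : Fin rx.length, j < i →
      L i j = ((S 2 (rx.get j) (rx.get i)).card : ℝ) := by
    intro i j hij
    rw [hlow i j hij]
    by_cases hc : (∀ r ∈ R, rx.get i ∈ r) ∧ (∀ r ∈ R, rx.get j ∈ r) ∧
        (∀ r ∈ R, r.idxOf (rx.get j) < r.idxOf (rx.get i))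
    · rw [if_pos hc]
      have hsingle : S 2 (rx.get j) (rx.get i) = {[rx.get j, rx.get i]} := by
        ext y
        rw [hSmem, Finset.mem_singleton]
        constructor
        · rintro ⟨-, hlen, hh, hl⟩; exact eq_pair_of hlen hh hl
        · rintro rfl
          refine ⟨fun r hr => ?_, rfl, rfl, rfl⟩
          have h1 : ([] ++ [rx.get j]).Sublist r := by
            simpa using List.singleton_sublist.mpr (hc.2.1 r hr)
          have := sublist_snoc_of (hnd r hr) h1 (hc.1 r hr) (hc.2.2 r hr)
          simpa using this
      rw [hsingle, Finset.card_singleton, Nat.cast_one]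
    · rw [if_neg hc]
      have hempty : S 2 (rx.get j) (rx.get i) = ∅ := by
        refine Finset.eq_empty_of_forall_notMem (fun y hy => ?_)
        obtain ⟨hsub, hlen, hh, hl⟩ := (hSmem _ _ _ y).mp hy
        have hy2 : y = [rx.get j, rx.get i] := eq_pair_of hlen hh hl
        refine hc ⟨fun r hr => ?_, fun r hr => ?_, fun r hr => ?_⟩ <;>
        · have := pair_sublist_of (hnd r hr) (hy2 ▸ hsub r hr)
          tauto
      rw [hempty, Finset.card_empty, Nat.cast_zero]
  -- strict lower triangularity of powers
  have htri : ∀ m, 1 ≤ m → ∀ i j : Fin rx.length, ¬ j < i → (L ^ m) i j = 0 := by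
    intro m hm
    induction m with
    | zero => omega
    | succ m ih =>
      intro i j hij
      by_cases hm0 : m = 0
      · subst hm0; rw [pow_one]; exact hrest i j hij
      · have hm1 : 1 ≤ m := Nat.one_le_iff_ne_zero.mpr hm0
        rw [pow_succ', Matrix.mul_apply]
        apply Finset.sum_eq_zero
        intro k _
        by_cases hk : k < i
        · rw [ih hm1 k j (fun h => hij (h.trans hk)), mul_zero]
        · rw [hrest i k hk, zero_mul]
  -- main induction
  have key : ∀ m, 1 ≤ m → ∀ i j : Fin rx.length, j < i →
      (L ^ m) i j = ((S (m + 1) (rx.get j) (rx.get i)).card : ℝ) := by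
    intro m hm
    induction m, hm using Nat.le_induction with
    | base => intro i j hij; rw [pow_one]; exact hbase i j hij
    | succ m hm ih =>
      intro i j hij
      set a := rx.get j with ha
      set c := rx.get i with hc
      set f0 : List α → Fin rx.length := fun y =>
        ⟨rx.idxOf ((y.dropLast.getLast?).getD c) % rx.length,
          Nat.mod_lt _ hn⟩ with hf0def
      -- basic facts about members of S (m+2) a c
      have hyfacts : ∀ y ∈ S (m + 1 + 1) a c,
          y.dropLast ++ [c] = y ∧ y.dropLast.length = m + 1 ∧
          y.dropLast.head? = some a ∧ y.dropLast.Sublist rx := by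
        intro y hy
        obtain ⟨hsub, hlen, hh, hl⟩ := (hSmem _ _ _ y).mp hy
        have hyne : y ≠ [] := by rintro rfl; simp at hlen
        obtain ⟨h', hcl⟩ := List.mem_getLast?_eq_getLast (Option.mem_def.mpr hl)
        have hsplit : y.dropLast ++ [c] = y := by
          rw [hcl]; exact List.dropLast_append_getLast h'
        have hdlen : y.dropLast.length = m + 1 := by
          rw [List.length_dropLast, hlen]; omega
        have hdne : y.dropLast ≠ [] := by
          intro h0; rw [h0] at hdlen; simp at hdlen
        have hdh : y.dropLast.head? = some a := by
          rw [← hsplit, List.head?_append] at hh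
          cases hdh' : y.dropLast.head? with
          | none => exact absurd (List.head?_eq_none_iff.mp hdh') hdne
          | some x =>
            rw [hdh'] at hh
            simp only [Option.some_or, Option.some.injEq] at hh
            rw [hh]
        exact ⟨hsplit, hdlen, hdh, (List.dropLast_sublist y).trans (hsub rx hrx)⟩
      -- characterization of the fiber function
      have hf0 : ∀ y ∈ S (m + 1 + 1) a c, ∀ k : Fin rx.length,
          f0 y = k ↔ y.dropLast.getLast? = some (rx.get k) := by
        intro y hy k
        obtain ⟨hsplit, hdlen, hdh, hdrx⟩ := hyfacts y hy
        have hdne : y.dropLast ≠ [] := by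
          intro h0; rw [h0] at hdlen; simp at hdlen
        obtain ⟨b, hb⟩ : ∃ b, y.dropLast.getLast? = some b := by
          cases hbb : y.dropLast.getLast? with
          | none => exact absurd (List.getLast?_eq_none_iff.mp hbb) hdne
          | some b => exact ⟨b, rfl⟩
        have hbrx : b ∈ rx := hdrx.subset (List.mem_of_getLast? hb)
        have hidx : rx.idxOf b < rx.length := List.idxOf_lt_length_iff.mpr hbrx
        have hval : (f0 y).val = rx.idxOf b := by
          simp only [hf0def, hb, Option.getD_some]
          exact Nat.mod_eq_of_lt hidx
        rw [hb]
        constructor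
        · intro hk
          rw [hk] at hval
          have : rx.get ⟨rx.idxOf b, hidx⟩ = b := List.idxOf_get hidx
          rw [show k = ⟨rx.idxOf b, hidx⟩ from Fin.ext hval, this]
        · intro hk
          have hbk : b = rx.get k := by
            simpa using hk
          apply Fin.ext
          rw [hval, hbk]
          exact List.Nodup.idxOf_getElem hrxnd k.val k.isLt
      -- any member of a fiber forces the three conditions
      have hfacts_k : ∀ k : Fin rx.length,
          ∀ y ∈ (S (m + 1 + 1) a c).filter (fun y => f0 y = k),
          j < k ∧ k < i ∧ ((∀ r ∈ R, rx.get i ∈ r) ∧ (∀ r ∈ R, rx.get k ∈ r) ∧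
            (∀ r ∈ R, r.idxOf (rx.get k) < r.idxOf (rx.get i))) := by
        intro k y hy
        rw [Finset.mem_filter] at hy
        obtain ⟨hyS, hfk⟩ := hy
        obtain ⟨hsplit, hdlen, hdh, hdrx⟩ := hyfacts y hyS
        obtain ⟨hsub, hlen, hh, hl⟩ := (hSmem _ _ _ y).mp hyS
        have hdl : y.dropLast.getLast? = some (rx.get k) := (hf0 y hyS k).mp hfk
        have hja : rx.idxOf a = (j : ℕ) := by
          rw [ha, List.get_eq_getElem]
          exact List.Nodup.idxOf_getElem hrxnd j.val j.isLt
        have hic : rx.idxOf c = (i : ℕ) := by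
          rw [hc, List.get_eq_getElem]
          exact List.Nodup.idxOf_getElem hrxnd i.val i.isLt
        have hkk : rx.idxOf (rx.get k) = (k : ℕ) := by
          rw [List.get_eq_getElem]
          exact List.Nodup.idxOf_getElem hrxnd k.val k.isLt
        -- j < k
        have hjk : j < k := by
          have hp1 : [a, rx.get k].Sublist rx :=
            (pair_head_last_sublist (by omega) hdh hdl).trans hdrx
          have := (pair_sublist_of hrxnd hp1).2.2
          rw [hja, hkk] at this
          exact this
        -- the pair [rx.get k, c] is a sublist of y
        have hkc : [rx.get k, c].Sublist y := by
          have hmem : rx.get k ∈ y.dropLast := List.mem_of_getLast? hdl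
          have : ([rx.get k] ++ [c]).Sublist (y.dropLast ++ [c]) :=
            List.Sublist.append (List.singleton_sublist.mpr hmem) (List.Sublist.refl _)
          rw [hsplit] at this
          simpa using this
        -- k < i
        have hki : k < i := by
          have := (pair_sublist_of hrxnd (hkc.trans (hsub rx hrx))).2.2
          rw [hkk, hic] at this
          exact this
        refine ⟨hjk, hki, fun r hr => ?_, fun r hr => ?_, fun r hr => ?_⟩ <;>
        · have := pair_sublist_of (hnd r hr) (hkc.trans (hsub r hr))
          tauto
      -- per-index term computation
      have hterm : ∀ k : Fin rx.length, L i k * (L ^ m) k j =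
          (((S (m + 1 + 1) a c).filter (fun y => f0 y = k)).card : ℝ) := by
        intro k
        by_cases h1 : k < i
        · by_cases h3 : (∀ r ∈ R, rx.get i ∈ r) ∧ (∀ r ∈ R, rx.get k ∈ r) ∧
              (∀ r ∈ R, r.idxOf (rx.get k) < r.idxOf (rx.get i))
          · by_cases h2 : j < k
            · -- main case: bijection with S (m+1) a (rx.get k)
              rw [hlow i k h1, if_pos h3, ih k j h2, one_mul]
              have hcard : (S (m + 1) a (rx.get k)).card =
                  ((S (m + 1 + 1) a c).filter (fun y => f0 y = k)).card := by
                apply Finset.card_bij (fun y _ => y ++ [c])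
                · -- maps into the fiber
                  intro y' hy'
                  obtain ⟨hsub, hlen, hh, hl⟩ := (hSmem _ _ _ y').mp hy'
                  have hy'ne : y' ≠ [] := by rintro rfl; simp at hlen
                  obtain ⟨h', hbl⟩ :=
                    List.mem_getLast?_eq_getLast (Option.mem_def.mpr hl)
                  have hsplit' : y'.dropLast ++ [rx.get k] = y' := by
                    rw [hbl]; exact List.dropLast_append_getLast h'
                  have hyS : y' ++ [c] ∈ S (m + 1 + 1) a c := by
                    rw [hSmem]
                    refine ⟨fun r hr => ?_, ?_, ?_, (List.getLast?_concat (l := y'))⟩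
                    · have hbase' : (y'.dropLast ++ [rx.get k]).Sublist r := by
                        rw [hsplit']; exact hsub r hr
                      have := sublist_snoc_of (hnd r hr) hbase' (h3.1 r hr)
                        (h3.2.2 r hr)
                      have heq : y'.dropLast ++ [rx.get k, c] =
                          (y'.dropLast ++ [rx.get k]) ++ [c] := by simp
                      rw [heq, hsplit'] at this
                      exact this
                    · rw [List.length_append, hlen]; rfl
                    · rw [List.head?_append]
                      cases hdh' : y'.head? with
                      | none => exact absurd (List.head?_eq_none_iff.mp hdh') hy'ne
                      | some x =>
                        rw [hdh'] at hh
                        simpa using hh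
                  rw [Finset.mem_filter]
                  refine ⟨hyS, ?_⟩
                  rw [hf0 _ hyS k, List.dropLast_concat]
                  exact hl
                · -- injective
                  intro y1 h1' y2 h2' heq
                  have := congrArg List.dropLast heq
                  rwa [List.dropLast_concat, List.dropLast_concat] at this
                · -- surjective
                  intro y hy
                  have hyS := (Finset.mem_filter.mp hy).1
                  have hfk := (Finset.mem_filter.mp hy).2
                  obtain ⟨hsplit, hdlen, hdh, hdrx⟩ := hyfacts y hyS
                  obtain ⟨hsub, hlen, hh, hl⟩ := (hSmem _ _ _ y).mp hyS
                  have hdl : y.dropLast.getLast? = some (rx.get k) :=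
                    (hf0 y hyS k).mp hfk
                  refine ⟨y.dropLast, ?_, hsplit⟩
                  rw [hSmem]
                  exact ⟨fun r hr => (List.dropLast_sublist y).trans (hsub r hr),
                    hdlen, hdh, hdl⟩
              rw [hcard]
            · -- j not less than k: both sides zero
              rw [htri m hm k j h2, mul_zero]
              have hempty : (S (m + 1 + 1) a c).filter (fun y => f0 y = k) = ∅ :=
                Finset.eq_empty_of_forall_notMem
                  (fun y hy => h2 (hfacts_k k y hy).1)
              rw [hempty, Finset.card_empty, Nat.cast_zero]
          · rw [hlow i k h1, if_neg h3, zero_mul]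
            have hempty : (S (m + 1 + 1) a c).filter (fun y => f0 y = k) = ∅ :=
              Finset.eq_empty_of_forall_notMem
                (fun y hy => h3 (hfacts_k k y hy).2.2)
            rw [hempty, Finset.card_empty, Nat.cast_zero]
        · rw [hrest i k h1, zero_mul]
          have hempty : (S (m + 1 + 1) a c).filter (fun y => f0 y = k) = ∅ :=
            Finset.eq_empty_of_forall_notMem
              (fun y hy => h1 (hfacts_k k y hy).2.1)
          rw [hempty, Finset.card_empty, Nat.cast_zero]
      -- assemble
      have hfiber_count : (S (m + 1 + 1) a c).card =
          ∑ k : Fin rx.length,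
            ((S (m + 1 + 1) a c).filter (fun y => f0 y = k)).card :=
        Finset.card_eq_sum_card_fiberwise (fun y _ => Finset.mem_univ (f0 y))
      rw [pow_succ', Matrix.mul_apply]
      rw [show ((S (m + 1 + 1) a c).card : ℝ) =
          ∑ k : Fin rx.length,
            (((S (m + 1 + 1) a c).filter (fun y => f0 y = k)).card : ℝ) by
        rw [hfiber_count]; push_cast; rfl]
      exact Finset.sum_congr rfl (fun k _ => hterm k)
  -- conclude
  have hset : {y ∈ commonSubseq (R : Set (List α)) |
      y.length = p ∧ y.head? = some (rx.get j) ∧ y.getLast? = some (rx.get i)} =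
      ↑(S p (rx.get j) (rx.get i)) := by
    ext y
    simp only [Set.mem_setOf_eq, commonSubseq, Finset.mem_coe, hSmem]
    constructor
    · rintro ⟨⟨hne, hsub⟩, hlen, hh, hl⟩
      exact ⟨fun r hr => hsub r (Finset.mem_coe.mpr hr), hlen, hh, hl⟩
    · rintro ⟨hsub, hlen, hh, hl⟩
      refine ⟨⟨?_, fun r hr => hsub r hr⟩, hlen, hh, hl⟩
      rintro rfl; simp at hlen; omega
  rw [hset, Set.ncard_coe_finset]
  have := key (p - 1) (by omega) i j hij
  rwa [show p - 1 + 1 = p by omega] at this
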